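/- arXiv:2307.12277 — 2 statements merged into one kernel-verified Lean document; each statement's English description precedes it below -/
import Mathlib

section
/- Let a, b ∈ ℝ and r > 0. Define θ = arctan(b/a) if (a,b) ≠ (0,0) and θ = 0 otherwise. Then the maximum of |(a+ib) − (p+iq)| over all (p,q) ∈ ℝ² with p ≥ 0 and |p+iq| ≤ r equals max{ |a + i(b+r)|, |a + i(b−r)|, |a + ib − r·e^{iθ}| }. -/
open Real

/-- Lemma 1: worst-case apparent power deviation over a half-disk. -/
theorem stmt_0 (a b r : ℝ) (hr : 0 < r) :
    IsGreatest
      {v : ℝ | ∃ p q : ℝ, 0 ≤ p ∧ ‖(p : ℂ) + (q : ℂ) * Complex.I‖ ≤ r ∧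
        v = ‖((a : ℂ) + (b : ℂ) * Complex.I) - ((p : ℂ) + (q : ℂ) * Complex.I)‖}
      (max (‖(a : ℂ) + ((b + r : ℝ) : ℂ) * Complex.I‖)
        (max (‖(a : ℂ) + ((b - r : ℝ) : ℂ) * Complex.I‖)
          (‖(a : ℂ) + (b : ℂ) * Complex.I -
            (r : ℂ) * Complex.exp
              (((if a ≠ 0 ∨ b ≠ 0 then Real.arctan (b / a) else 0 : ℝ) : ℂ) * Complex.I)‖))) := by
  set θ : ℝ := if a ≠ 0 ∨ b ≠ 0 then Real.arctan (b / a) else 0 with hθdef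
  have hcos : 0 ≤ Real.cos θ := by
    rw [hθdef]; split_ifs with h
    · rw [Real.cos_arctan]; positivity
    · simp
  have hexp : ((r * Real.cos θ : ℝ) : ℂ) + ((r * Real.sin θ : ℝ) : ℂ) * Complex.I
      = (r : ℂ) * Complex.exp ((θ : ℂ) * Complex.I) := by
    rw [Complex.exp_mul_I, ← Complex.ofReal_cos, ← Complex.ofReal_sin]
    push_cast; ring
  have mem1 : (‖(a : ℂ) + ((b + r : ℝ) : ℂ) * Complex.I‖) ∈
      {v : ℝ | ∃ p q : ℝ, 0 ≤ p ∧ ‖(p : ℂ) + (q : ℂ) * Complex.I‖ ≤ r ∧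
        v = ‖((a : ℂ) + (b : ℂ) * Complex.I) - ((p : ℂ) + (q : ℂ) * Complex.I)‖} := by
    refine ⟨0, -r, le_refl 0, ?_, ?_⟩
    · simp [abs_of_pos hr]
    · congr 1; push_cast; ring
  have mem2 : (‖(a : ℂ) + ((b - r : ℝ) : ℂ) * Complex.I‖) ∈
      {v : ℝ | ∃ p q : ℝ, 0 ≤ p ∧ ‖(p : ℂ) + (q : ℂ) * Complex.I‖ ≤ r ∧
        v = ‖((a : ℂ) + (b : ℂ) * Complex.I) - ((p : ℂ) + (q : ℂ) * Complex.I)‖} := by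
    refine ⟨0, r, le_refl 0, ?_, ?_⟩
    · simp [abs_of_pos hr]
    · congr 1; push_cast; ring
  have mem3 : (‖(a : ℂ) + (b : ℂ) * Complex.I -
            (r : ℂ) * Complex.exp ((θ : ℂ) * Complex.I)‖) ∈
      {v : ℝ | ∃ p q : ℝ, 0 ≤ p ∧ ‖(p : ℂ) + (q : ℂ) * Complex.I‖ ≤ r ∧
        v = ‖((a : ℂ) + (b : ℂ) * Complex.I) - ((p : ℂ) + (q : ℂ) * Complex.I)‖} := by
    refine ⟨r * Real.cos θ, r * Real.sin θ, mul_nonneg hr.le hcos, ?_, ?_⟩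
    · rw [hexp, norm_mul, Complex.norm_real, Real.norm_eq_abs, Complex.norm_exp_ofReal_mul_I,
        abs_of_pos hr, mul_one]
    · rw [hexp]
  constructor
  · rcases max_choice (‖(a : ℂ) + ((b + r : ℝ) : ℂ) * Complex.I‖)
      (max (‖(a : ℂ) + ((b - r : ℝ) : ℂ) * Complex.I‖)
          (‖(a : ℂ) + (b : ℂ) * Complex.I -
            (r : ℂ) * Complex.exp ((θ : ℂ) * Complex.I)‖)) with h | h
    · rw [h]; exact mem1
    · rw [h]
      rcases max_choice (‖(a : ℂ) + ((b - r : ℝ) : ℂ) * Complex.I‖)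
          (‖(a : ℂ) + (b : ℂ) * Complex.I -
            (r : ℂ) * Complex.exp ((θ : ℂ) * Complex.I)‖) with h2 | h2
      · rw [h2]; exact mem2
      · rw [h2]; exact mem3
  · rintro v ⟨p, q, hp, hpq, rfl⟩
    have hpq2 : p ^ 2 + q ^ 2 ≤ r ^ 2 := by
      rw [Complex.norm_add_mul_I] at hpq
      nlinarith [Real.sq_sqrt (show (0:ℝ) ≤ p ^ 2 + q ^ 2 by positivity),
        Real.sqrt_nonneg (p ^ 2 + q ^ 2)]
    rcases lt_or_ge a 0 with ha | ha
    · -- a < 0 : triangle inequality, third candidate equals |z| + r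
      set n : ℝ := Real.sqrt (a ^ 2 + b ^ 2) with hn
      have hn0 : 0 < n := Real.sqrt_pos.2 (by nlinarith [mul_pos (neg_pos.2 ha) (neg_pos.2 ha), sq_nonneg b])
      have habsz : ‖(a : ℂ) + (b : ℂ) * Complex.I‖ = n :=
        Complex.norm_add_mul_I a b
      have hθa : θ = Real.arctan (b / a) := by
        rw [hθdef, if_pos (Or.inl ha.ne)]
      have ha' : a ≠ 0 := ha.ne
      have hsq : Real.sqrt (1 + (b / a) ^ 2) = n / (-a) := by
        rw [show 1 + (b / a) ^ 2 = (a ^ 2 + b ^ 2) / a ^ 2 by field_simp]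
        rw [Real.sqrt_div (by positivity), Real.sqrt_sq_eq_abs, abs_of_neg ha]
      have hcosθ : Real.cos θ = -a / n := by
        rw [hθa, Real.cos_arctan, hsq]
        field_simp
      have hsinθ : Real.sin θ = -b / n := by
        rw [hθa, Real.sin_arctan, hsq]
        field_simp
      have key : ((a : ℂ) + (b : ℂ) * Complex.I - (r : ℂ) * Complex.exp ((θ : ℂ) * Complex.I))
          = ((1 + r / n : ℝ) : ℂ) * ((a : ℂ) + (b : ℂ) * Complex.I) := by
        rw [Complex.exp_mul_I, ← Complex.ofReal_cos, ← Complex.ofReal_sin, hcosθ, hsinθ]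
        push_cast
        field_simp
        ring
      have hA3 : ‖(a : ℂ) + (b : ℂ) * Complex.I -
          (r : ℂ) * Complex.exp ((θ : ℂ) * Complex.I)‖ = n + r := by
        rw [key, norm_mul, Complex.norm_real, Real.norm_eq_abs, habsz,
          abs_of_pos (by positivity : (0:ℝ) < 1 + r / n)]
        field_simp
      have htri : ‖((a : ℂ) + (b : ℂ) * Complex.I) - ((p : ℂ) + (q : ℂ) * Complex.I)‖
          ≤ n + r := by
        calc ‖((a : ℂ) + (b : ℂ) * Complex.I) - ((p : ℂ) + (q : ℂ) * Complex.I)‖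
            ≤ ‖(a : ℂ) + (b : ℂ) * Complex.I‖
              + ‖(p : ℂ) + (q : ℂ) * Complex.I‖ := by
              exact norm_sub_le _ _
          _ ≤ n + r := by rw [habsz]; exact add_le_add_right hpq n
      exact le_trans (htri.trans_eq hA3.symm) (le_max_of_le_right (le_max_right _ _))
    · -- a ≥ 0 : first two candidates dominate
      have hw : ((a : ℂ) + (b : ℂ) * Complex.I) - ((p : ℂ) + (q : ℂ) * Complex.I)
          = ((a - p : ℝ) : ℂ) + ((b - q : ℝ) : ℂ) * Complex.I := by push_cast; ring
      rcases le_or_gt 0 b with hb | hb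
      · refine le_max_of_le_left ?_
        rw [hw, Complex.norm_add_mul_I, Complex.norm_add_mul_I]
        apply Real.sqrt_le_sqrt
        nlinarith [mul_nonneg ha hp,
          mul_nonneg hb (show (0:ℝ) ≤ q + r by nlinarith [sq_nonneg (q + r)])]
      · refine le_max_of_le_right (le_max_of_le_left ?_)
        rw [hw, Complex.norm_add_mul_I, Complex.norm_add_mul_I]
        apply Real.sqrt_le_sqrt
        nlinarith [mul_nonneg ha hp,
          mul_nonneg (neg_nonneg.2 hb.le) (show (0:ℝ) ≤ r - q by nlinarith [sq_nonneg (q - r)])]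
end

section
/- Lemma 2 (optimal aggregated apparent power): Fix a tree with descendant matrix D, bus n, failure set I ⊆ N, loads p̂^L, q̂^L ∈ ℝ^N, nominal generations p̂^G, q̂^G ∈ ℝ^N, capacities C ∈ ℝ^N with C ≥ 0. Then max over (p^G, q^G) satisfying p^G_m ≥ 0, |p^G_m + i q^G_m| ≤ C_m for m ∈ I and p^G_m = p̂^G_m, q^G_m = q̂^G_m for m ∉ I, of |Σ_{m ∈ d(n)} ((p^G_m − p̂^L_m) + i (q^G_m − q̂^L_m))| equals max{ |a + i(b+r)|, |a + i(b−r)|, |a + ib − r e^{iθ}| }, where a = Σ_{m ∈ d(n)} p̂^L_m − Σ_{m ∈ d(n)∖I} p̂^G_m, b = Σ_{m ∈ d(n)} q̂^L_m − Σ_{m ∈ d(n)∖I} q̂^G_m, r = Σ_{m ∈ d(n)∩I} C_m, and θ = arctan(b/a) if (a,b) ≠ (0,0), else θ = 0. -/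
open Real

/-- Lemma 2: optimal aggregated apparent power under update failures on `I`. -/
theorem stmt_12 (N : ℕ) (dn I : Finset (Fin N))
    (pL qL pG qG C : Fin N → ℝ) (hC : ∀ m, 0 ≤ C m)
    (a b r θ : ℝ)
    (ha : a = ∑ m ∈ dn, pL m - ∑ m ∈ dn \ I, pG m)
    (hb : b = ∑ m ∈ dn, qL m - ∑ m ∈ dn \ I, qG m)
    (hr : r = ∑ m ∈ dn ∩ I, C m)
    (hθ : θ = if a ≠ 0 ∨ b ≠ 0 then Real.arctan (b / a) else 0) :
    IsGreatest
      {v : ℝ | ∃ pg qg : Fin N → ℝ,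
        (∀ m ∈ I, 0 ≤ pg m ∧ ‖(pg m : ℂ) + (qg m : ℂ) * Complex.I‖ ≤ C m) ∧
        (∀ m ∉ I, pg m = pG m ∧ qg m = qG m) ∧
        v = ‖∑ m ∈ dn,
              (((pg m - pL m : ℝ) : ℂ) + ((qg m - qL m : ℝ) : ℂ) * Complex.I)‖}
      (max ‖(a : ℂ) + ((b + r : ℝ) : ℂ) * Complex.I‖
        (max ‖(a : ℂ) + ((b - r : ℝ) : ℂ) * Complex.I‖
          ‖(a : ℂ) + (b : ℂ) * Complex.I -
            (r : ℂ) * Complex.exp ((θ : ℂ) * Complex.I)‖)) := by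
  have hr0 : 0 ≤ r := by
    rw [hr]; exact Finset.sum_nonneg fun m _ => hC m
  set c : ℂ := (a : ℂ) + (b : ℂ) * Complex.I with hcdef
  have pack : ∀ (t : Finset (Fin N)) (f g : Fin N → ℝ),
      ∑ m ∈ t, ((f m : ℂ) + (g m : ℂ) * Complex.I)
        = ((∑ m ∈ t, f m : ℝ) : ℂ) + ((∑ m ∈ t, g m : ℝ) : ℂ) * Complex.I := by
    intro t f g
    rw [Finset.sum_add_distrib, ← Finset.sum_mul]
    push_cast
    ring
  -- the value of the objective for a feasible point
  have hval : ∀ pg qg : Fin N → ℝ, (∀ m ∉ I, pg m = pG m ∧ qg m = qG m) →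
      (∑ m ∈ dn, (((pg m - pL m : ℝ) : ℂ) + ((qg m - qL m : ℝ) : ℂ) * Complex.I))
        = (∑ m ∈ dn ∩ I, ((pg m : ℂ) + (qg m : ℂ) * Complex.I)) - c := by
    intro pg qg hfix
    have e1 : ∑ m ∈ dn, (pg m - pL m) = (∑ m ∈ dn ∩ I, pg m) - a := by
      have hdiff : ∑ m ∈ dn \ I, pg m = ∑ m ∈ dn \ I, pG m :=
        Finset.sum_congr rfl fun m hm => (hfix m (Finset.mem_sdiff.mp hm).2).1
      rw [Finset.sum_sub_distrib, ha, ← Finset.sum_inter_add_sum_sdiff dn I pg, hdiff]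
      ring
    have e2 : ∑ m ∈ dn, (qg m - qL m) = (∑ m ∈ dn ∩ I, qg m) - b := by
      have hdiff : ∑ m ∈ dn \ I, qg m = ∑ m ∈ dn \ I, qG m :=
        Finset.sum_congr rfl fun m hm => (hfix m (Finset.mem_sdiff.mp hm).2).2
      rw [Finset.sum_sub_distrib, hb, ← Finset.sum_inter_add_sum_sdiff dn I qg, hdiff]
      ring
    simp only [pack]
    rw [e1, e2, hcdef]
    push_cast
    ring
  -- attainability: any w in the half-disk of radius r gives a feasible value |w - c|
  have key : ∀ w : ℂ, 0 ≤ w.re → ‖w‖ ≤ r →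
      ‖w - c‖ ∈
      {v : ℝ | ∃ pg qg : Fin N → ℝ,
        (∀ m ∈ I, 0 ≤ pg m ∧ ‖(pg m : ℂ) + (qg m : ℂ) * Complex.I‖ ≤ C m) ∧
        (∀ m ∉ I, pg m = pG m ∧ qg m = qG m) ∧
        v = ‖∑ m ∈ dn,
              (((pg m - pL m : ℝ) : ℂ) + ((qg m - qL m : ℝ) : ℂ) * Complex.I)‖} := by
    intro w hwre hwabs
    rcases eq_or_lt_of_le hr0 with h0 | hpos
    · -- r = 0 : necessarily w = 0
      have hw0 : w = 0 := by
        have : ‖w‖ = 0 :=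
          le_antisymm (hwabs.trans h0.symm.le) (norm_nonneg w)
        simpa using this
      set pg0 : Fin N → ℝ := fun m => if m ∈ I then 0 else pG m with hpg0
      set qg0 : Fin N → ℝ := fun m => if m ∈ I then 0 else qG m with hqg0
      refine ⟨pg0, qg0,
        fun m hm => by simp [hpg0, hqg0, hm, hC m], fun m hm => by simp [hpg0, hqg0, hm], ?_⟩
      rw [hval _ _ (fun m hm => by simp [hpg0, hqg0, hm])]
      have hz : ∑ m ∈ dn ∩ I, ((pg0 m : ℂ) + (qg0 m : ℂ) * Complex.I) = 0 := by
        refine Finset.sum_eq_zero fun m hm => ?_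
        have hmI : m ∈ I := (Finset.mem_inter.mp hm).2
        simp [hpg0, hqg0, hmI]
      rw [hz, hw0]
    · -- r > 0 : proportional allocation
      set pg : Fin N → ℝ := fun m => if m ∈ I then C m * w.re / r else pG m with hpg
      set qg : Fin N → ℝ := fun m => if m ∈ I then C m * w.im / r else qG m with hqg
      have hterm : ∀ m, m ∈ I →
          ((pg m : ℂ) + (qg m : ℂ) * Complex.I) = ((C m / r : ℝ) : ℂ) * w := by
        intro m hm
        simp only [hpg, hqg, if_pos hm]
        conv_rhs => rw [← Complex.re_add_im w]
        push_cast
        ring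
      refine ⟨pg, qg, fun m hm => ?_, fun m hm => by simp [hpg, hqg, hm], ?_⟩
      · constructor
        · simp only [hpg, if_pos hm]
          exact div_nonneg (mul_nonneg (hC m) hwre) hr0
        · rw [hterm m hm, norm_mul]
          have habs1 : ‖((C m / r : ℝ) : ℂ)‖ = C m / r := by
            rw [Complex.norm_real, Real.norm_eq_abs, abs_of_nonneg (div_nonneg (hC m) hr0)]
          rw [habs1]
          calc C m / r * ‖w‖ ≤ C m / r * r :=
                mul_le_mul_of_nonneg_left hwabs (div_nonneg (hC m) hr0)
            _ = C m := div_mul_cancel₀ (C m) hpos.ne'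
      · rw [hval _ _ (fun m hm => by simp [hpg, hqg, hm])]
        have hone : ∑ m ∈ dn ∩ I, ((C m / r : ℝ) : ℂ) = 1 := by
          rw [← Complex.ofReal_sum, ← Finset.sum_div, ← hr, div_self hpos.ne']
          exact Complex.ofReal_one
        have hsum : ∑ m ∈ dn ∩ I, ((pg m : ℂ) + (qg m : ℂ) * Complex.I) = w := by
          rw [Finset.sum_congr rfl (fun m hm => hterm m (Finset.mem_inter.mp hm).2),
            ← Finset.sum_mul, hone, one_mul]
        rw [hsum]
  -- upper bound
  have hub : ∀ w : ℂ, 0 ≤ w.re → ‖w‖ ≤ r →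
      ‖w - c‖ ≤
      (max (‖(a : ℂ) + ((b + r : ℝ) : ℂ) * Complex.I‖)
        (max (‖(a : ℂ) + ((b - r : ℝ) : ℂ) * Complex.I‖)
          (‖(a : ℂ) + (b : ℂ) * Complex.I -
            (r : ℂ) * Complex.exp ((θ : ℂ) * Complex.I)‖))) := by
    intro w hwre hwabs
    rcases lt_or_ge a 0 with hna | hag
    · -- a < 0 : third candidate equals |c| + r and dominates
      have ha0 : a ≠ 0 := hna.ne
      set s : ℝ := Real.sqrt (a^2 + b^2) with hsdef
      have hspos : 0 < s := Real.sqrt_pos.mpr (by nlinarith)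
      have hs0 : s ≠ 0 := hspos.ne'
      have hs0' : (s : ℂ) ≠ 0 := Complex.ofReal_ne_zero.mpr hs0
      have hs2 : s^2 = a^2 + b^2 := Real.sq_sqrt (by positivity)
      have habs_c : ‖c‖ = s := by
        rw [hcdef, Complex.norm_add_mul_I]
      have hθval : θ = Real.arctan (b / a) := by
        rw [hθ, if_pos (Or.inl hna.ne)]
      have hsqrt : Real.sqrt (1 + (b/a)^2) = s / (-a) := by
        have h1 : 1 + (b/a)^2 = (a^2+b^2) / a^2 := by
          field_simp
        rw [h1, Real.sqrt_div (by positivity), Real.sqrt_sq_eq_abs,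
          abs_of_neg hna, ← hsdef]
      have hcos : Real.cos θ = -a / s := by
        rw [hθval, Real.cos_arctan, hsqrt]
        field_simp
      have hsin : Real.sin θ = -b / s := by
        rw [hθval, Real.sin_arctan, hsqrt]
        field_simp
      have hexp : Complex.exp ((θ:ℂ) * Complex.I)
          = ((-a/s : ℝ) : ℂ) + ((-b/s : ℝ) : ℂ) * Complex.I := by
        rw [Complex.exp_mul_I, ← Complex.ofReal_cos, ← Complex.ofReal_sin, hcos, hsin]
      have hthird : ‖c - (r:ℂ) * Complex.exp ((θ:ℂ) * Complex.I)‖ = s + r := by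
        have heq : c - (r:ℂ) * Complex.exp ((θ:ℂ) * Complex.I)
            = (((s + r)/s : ℝ) : ℂ) * c := by
          rw [hexp, hcdef]
          push_cast
          field_simp
          ring
        rw [heq, norm_mul, habs_c, Complex.norm_real, Real.norm_eq_abs,
          abs_of_nonneg (by positivity)]
        field_simp
      have h1 : ‖w - c‖ ≤ r + s := by
        calc ‖w - c‖ ≤ ‖w‖ + ‖c‖ := by
              simpa [sub_eq_add_neg] using norm_add_le w (-c)
          _ ≤ r + s := by rw [habs_c]; linarith
      refine le_trans h1 (le_trans ?_ (le_max_right _ _))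
      refine le_trans ?_ (le_max_right _ _)
      rw [← hcdef, hthird]
      linarith
    · -- a ≥ 0 : one of the first two candidates dominates
      have hX2 : (‖w - c‖)^2 = (w.re - a)^2 + (w.im - b)^2 := by
        rw [Complex.sq_norm, Complex.normSq_apply, hcdef]
        simp only [Complex.sub_re, Complex.sub_im, Complex.add_re, Complex.add_im,
          Complex.mul_re, Complex.mul_im, Complex.I_re, Complex.I_im,
          Complex.ofReal_re, Complex.ofReal_im]
        ring
      have hxy : w.re^2 + w.im^2 ≤ r^2 := by
        have h1 : (‖w‖)^2 ≤ r^2 := by nlinarith [norm_nonneg w]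
        rw [Complex.sq_norm, Complex.normSq_apply] at h1
        nlinarith [h1]
      have hyr : -r ≤ w.im ∧ w.im ≤ r := by
        constructor <;> nlinarith [sq_nonneg w.re, sq_nonneg (w.im + r), sq_nonneg (w.im - r)]
      rcases le_total 0 b with hbs | hbs
      · refine le_trans ?_ (le_max_left _ _)
        have hc1 : (‖(a : ℂ) + ((b + r : ℝ) : ℂ) * Complex.I‖)^2
            = a^2 + (b+r)^2 := by
          rw [Complex.sq_norm, Complex.normSq_add_mul_I]
        refine le_of_pow_le_pow_left₀ two_ne_zero (norm_nonneg _) ?_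
        rw [hX2, hc1]
        nlinarith [hyr.1, hyr.2]
      · refine le_trans (le_trans ?_ (le_max_left _ _)) (le_max_right _ _)
        have hc2 : (‖(a : ℂ) + ((b - r : ℝ) : ℂ) * Complex.I‖)^2
            = a^2 + (b-r)^2 := by
          rw [Complex.sq_norm, Complex.normSq_add_mul_I]
        refine le_of_pow_le_pow_left₀ two_ne_zero (norm_nonneg _) ?_
        rw [hX2, hc2]
        nlinarith [hyr.1, hyr.2]
  constructor
  · -- the maximum is attained
    have mem1 : ‖(a : ℂ) + ((b + r : ℝ) : ℂ) * Complex.I‖ ∈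
        {v : ℝ | ∃ pg qg : Fin N → ℝ,
        (∀ m ∈ I, 0 ≤ pg m ∧ ‖(pg m : ℂ) + (qg m : ℂ) * Complex.I‖ ≤ C m) ∧
        (∀ m ∉ I, pg m = pG m ∧ qg m = qG m) ∧
        v = ‖∑ m ∈ dn,
              (((pg m - pL m : ℝ) : ℂ) + ((qg m - qL m : ℝ) : ℂ) * Complex.I)‖} := by
      have h := key (-(r:ℂ) * Complex.I) (by simp) (by simp [abs_of_nonneg hr0])
      have e : -(r:ℂ) * Complex.I - c = -((a : ℂ) + ((b + r : ℝ) : ℂ) * Complex.I) := by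
        rw [hcdef]; push_cast; ring
      rwa [e, norm_neg] at h
    have mem2 : ‖(a : ℂ) + ((b - r : ℝ) : ℂ) * Complex.I‖ ∈
        {v : ℝ | ∃ pg qg : Fin N → ℝ,
        (∀ m ∈ I, 0 ≤ pg m ∧ ‖(pg m : ℂ) + (qg m : ℂ) * Complex.I‖ ≤ C m) ∧
        (∀ m ∉ I, pg m = pG m ∧ qg m = qG m) ∧
        v = ‖∑ m ∈ dn,
              (((pg m - pL m : ℝ) : ℂ) + ((qg m - qL m : ℝ) : ℂ) * Complex.I)‖} := by
      have h := key ((r:ℂ) * Complex.I) (by simp) (by simp [abs_of_nonneg hr0])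
      have e : (r:ℂ) * Complex.I - c = -((a : ℂ) + ((b - r : ℝ) : ℂ) * Complex.I) := by
        rw [hcdef]; push_cast; ring
      rwa [e, norm_neg] at h
    have mem3 : ‖(a : ℂ) + (b : ℂ) * Complex.I -
        (r : ℂ) * Complex.exp ((θ : ℂ) * Complex.I)‖ ∈
        {v : ℝ | ∃ pg qg : Fin N → ℝ,
        (∀ m ∈ I, 0 ≤ pg m ∧ ‖(pg m : ℂ) + (qg m : ℂ) * Complex.I‖ ≤ C m) ∧
        (∀ m ∉ I, pg m = pG m ∧ qg m = qG m) ∧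
        v = ‖∑ m ∈ dn,
              (((pg m - pL m : ℝ) : ℂ) + ((qg m - qL m : ℝ) : ℂ) * Complex.I)‖} := by
      have hcosθ : 0 ≤ Real.cos θ := by
        rw [hθ]
        split
        · rw [Real.cos_arctan]; positivity
        · simp
      have hre : 0 ≤ ((r:ℂ) * Complex.exp ((θ:ℂ) * Complex.I)).re := by
        have hre' : ((r:ℂ) * Complex.exp ((θ:ℂ) * Complex.I)).re = r * Real.cos θ := by
          rw [Complex.exp_mul_I, ← Complex.ofReal_cos, ← Complex.ofReal_sin]
          simp only [Complex.mul_re, Complex.ofReal_re, Complex.ofReal_im,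
            Complex.add_re, Complex.add_im, Complex.mul_re, Complex.mul_im,
            Complex.I_re, Complex.I_im]
          ring
        rw [hre']
        exact mul_nonneg hr0 hcosθ
      have habs : ‖(r:ℂ) * Complex.exp ((θ:ℂ) * Complex.I)‖ ≤ r := by
        rw [norm_mul, Complex.norm_exp_ofReal_mul_I, Complex.norm_real, Real.norm_eq_abs,
          abs_of_nonneg hr0, mul_one]
      have h := key _ hre habs
      have e : ‖(r:ℂ) * Complex.exp ((θ:ℂ) * Complex.I) - c‖
          = ‖(a : ℂ) + (b : ℂ) * Complex.I -
            (r : ℂ) * Complex.exp ((θ : ℂ) * Complex.I)‖ := by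
        rw [← hcdef, norm_sub_rev]
      rwa [e] at h
    rcases max_choice (‖(a : ℂ) + ((b + r : ℝ) : ℂ) * Complex.I‖)
      (max (‖(a : ℂ) + ((b - r : ℝ) : ℂ) * Complex.I‖)
        (‖(a : ℂ) + (b : ℂ) * Complex.I -
          (r : ℂ) * Complex.exp ((θ : ℂ) * Complex.I)‖)) with h | h
    · rw [h]; exact mem1
    · rw [h]
      rcases max_choice (‖(a : ℂ) + ((b - r : ℝ) : ℂ) * Complex.I‖)
        (‖(a : ℂ) + (b : ℂ) * Complex.I -
          (r : ℂ) * Complex.exp ((θ : ℂ) * Complex.I)‖) with h2 | h2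
      · rw [h2]; exact mem2
      · rw [h2]; exact mem3
  · -- upper bound
    rintro v ⟨pg, qg, hfeas, hfix, hv⟩
    rw [hv, hval pg qg hfix]
    apply hub
    · rw [Complex.re_sum]
      refine Finset.sum_nonneg fun m hm => ?_
      have h := (hfeas m (Finset.mem_inter.mp hm).2).1
      simpa using h
    · calc ‖∑ m ∈ dn ∩ I, ((pg m : ℂ) + (qg m : ℂ) * Complex.I)‖
          ≤ ∑ m ∈ dn ∩ I, ‖(pg m : ℂ) + (qg m : ℂ) * Complex.I‖ :=
          norm_sum_le _ _
        _ ≤ ∑ m ∈ dn ∩ I, C m :=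
          Finset.sum_le_sum fun m hm => (hfeas m (Finset.mem_inter.mp hm).2).2
        _ = r := hr.symm
end
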